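/- For every real x, the second derivative f'' of the function f(x) := H₂(Q(x)) satisfies | f''(x) | ≤ (2/√(2π)) · (1 + |x|) · e^{−x²/2} + ( |x|³ / √(2π) ) · e^{−x²/2}. -/

import Mathlib

open MeasureTheory Real Set Filter

/-- Binary entropy function with natural logarithm. -/
noncomputable def binH (q : ℝ) : ℝ := -q * Real.log q - (1 - q) * Real.log (1 - q)

/-- The standard Gaussian upper-tail function `Q(x) = ∫_x^∞ (1/√(2π)) e^{−t²/2} dt`. -/
noncomputable def gaussQ (x : ℝ) : ℝ :=
  ∫ t in Set.Ici x, (Real.sqrt (2 * Real.pi))⁻¹ * Real.exp (-t ^ 2 / 2)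

noncomputable def gg (t : ℝ) : ℝ := (Real.sqrt (2 * Real.pi))⁻¹ * Real.exp (-t ^ 2 / 2)

noncomputable def FF (x : ℝ) : ℝ :=
  x * gg x * (Real.log (1 - gaussQ x) - Real.log (gaussQ x))
    - gg x ^ 2 * ((gaussQ x)⁻¹ + (1 - gaussQ x)⁻¹)


lemma sqrt2pi_pos : 0 < Real.sqrt (2 * Real.pi) := Real.sqrt_pos.2 (by positivity)

lemma sqrt2pi_lb : 2.5066 ≤ Real.sqrt (2 * Real.pi) := by
  have h := Real.pi_gt_d6
  rw [show (2.5066:ℝ) = Real.sqrt (2.5066^2) by rw [Real.sqrt_sq]; norm_num]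
  apply Real.sqrt_le_sqrt; nlinarith

lemma sqrt2pi_ub : Real.sqrt (2 * Real.pi) ≤ 2.5067 := by
  have h := Real.pi_lt_d6
  rw [show (2.5067:ℝ) = Real.sqrt (2.5067^2) by rw [Real.sqrt_sq]; norm_num]
  apply Real.sqrt_le_sqrt; nlinarith

lemma gg_pos (t : ℝ) : 0 < gg t := by
  unfold gg; positivity

lemma gg_cont : Continuous gg := by
  unfold gg; continuity

lemma gg_integrable : Integrable gg := by
  unfold gg
  have h : Integrable (fun t : ℝ => Real.exp (-(1/2) * t ^ 2)) := integrable_exp_neg_mul_sq (by norm_num)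
  exact (h.const_mul ((Real.sqrt (2 * Real.pi))⁻¹)).congr
    (by filter_upwards with t; congr 1; ring)

lemma gg_total : ∫ t : ℝ, gg t = 1 := by
  unfold gg
  rw [MeasureTheory.integral_const_mul]
  have : (fun t : ℝ => Real.exp (-t ^ 2 / 2)) = fun t : ℝ => Real.exp (-(1/2) * t ^ 2) := by
    funext t; ring_nf
  rw [this, integral_gaussian]
  rw [show Real.pi / (1/2) = 2 * Real.pi by ring]
  field_simp

lemma gg_even (t : ℝ) : gg (-t) = gg t := by unfold gg; ring_nf

lemma gaussQ_eq (x : ℝ) : gaussQ x = ∫ t in Set.Ici x, gg t := rfl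

lemma gaussQ_add_Iic (x : ℝ) : gaussQ x + ∫ t in Set.Iic x, gg t = 1 := by
  rw [gaussQ_eq, MeasureTheory.integral_Ici_eq_integral_Ioi, add_comm,
    intervalIntegral.integral_Iic_add_Ioi gg_integrable.integrableOn gg_integrable.integrableOn,
    gg_total]

lemma gaussQ_neg (x : ℝ) : gaussQ (-x) = 1 - gaussQ x := by
  have h1 : (∫ t in Set.Iic x, gg t) = gaussQ (-x) := by
    rw [gaussQ_eq]
    rw [show (∫ t in Set.Iic x, gg t) = ∫ t in Set.Iic x, gg (-t) by
      apply MeasureTheory.setIntegral_congr_fun measurableSet_Iic; intro t _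
      exact (gg_even t).symm]
    rw [integral_comp_neg_Iic x gg, ← MeasureTheory.integral_Ici_eq_integral_Ioi]
  have := gaussQ_add_Iic x
  linarith

lemma gaussQ_zero : gaussQ 0 = 1/2 := by
  have := gaussQ_neg 0
  rw [neg_zero] at this; linarith

lemma gaussQ_anti : Antitone gaussQ := by
  intro a b hab
  rw [gaussQ_eq, gaussQ_eq]
  apply MeasureTheory.setIntegral_mono_set gg_integrable.integrableOn
  · filter_upwards with t using (gg_pos t).le
  · exact HasSubset.Subset.eventuallyLE (Set.Ici_subset_Ici.2 hab)

lemma gaussQ_pos (x : ℝ) : 0 < gaussQ x := by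
  rw [gaussQ_eq]
  apply (MeasureTheory.setIntegral_pos_iff_support_of_nonneg_ae ?_ ?_).2
  · have : (Function.support gg) = Set.univ := by
      ext t; simp [Function.support, (gg_pos t).ne']
    rw [this, Set.univ_inter]
    simp [Real.volume_Ici]
  · filter_upwards with t using (gg_pos t).le
  · exact gg_integrable.integrableOn

lemma gaussQ_lt_one (x : ℝ) : gaussQ x < 1 := by
  have := gaussQ_pos (-x)
  rw [gaussQ_neg] at this; linarith

lemma gaussQ_sub_intervalIntegral (x : ℝ) :
    gaussQ x = 1/2 - ∫ t in (0:ℝ)..x, gg t := by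
  have h0 := gaussQ_add_Iic 0
  have hx := gaussQ_add_Iic x
  have := intervalIntegral.integral_Iic_sub_Iic gg_integrable.integrableOn gg_integrable.integrableOn
    (a := 0) (b := x)
  rw [gaussQ_zero] at h0
  linarith

lemma hasDerivAt_gaussQ (x : ℝ) : HasDerivAt gaussQ (-(gg x)) x := by
  have h : ∀ y, gaussQ y = 1/2 - ∫ t in (0:ℝ)..y, gg t := gaussQ_sub_intervalIntegral
  have hd : HasDerivAt (fun y => ∫ t in (0:ℝ)..y, gg t) (gg x) x := by
    apply intervalIntegral.integral_hasDerivAt_right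
      gg_integrable.intervalIntegrable
      (gg_cont.stronglyMeasurable.stronglyMeasurableAtFilter)
      gg_cont.continuousAt
  have := hd.const_sub (1/2)
  exact (Filter.EventuallyEq.hasDerivAt_iff (by filter_upwards with y; rw [h y])).1 this

lemma nonneg_of_deriv {F F' : ℝ → ℝ} (hd : ∀ t, HasDerivAt F (F' t) t)
    (h0 : F 0 = 0) (hF' : ∀ t, 0 ≤ t → 0 ≤ F' t) {u : ℝ} (hu : 0 ≤ u) : 0 ≤ F u := by
  have hmono : MonotoneOn F (Set.Ici 0) := by
    apply monotoneOn_of_deriv_nonneg (convex_Ici 0)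
      (Continuous.continuousOn (Differentiable.continuous (fun t => (hd t).differentiableAt)))
      (fun t ht => ((hd t).differentiableAt).differentiableWithinAt)
    intro t ht
    rw [interior_Ici] at ht
    rw [(hd t).deriv]
    exact hF' t (le_of_lt ht)
  have := hmono (Set.self_mem_Ici) (Set.mem_Ici.2 hu) hu
  linarith

lemma exp_neg_le_two {u : ℝ} (hu : 0 ≤ u) : Real.exp (-u) ≤ 1 - u + u^2/2 := by
  have key : 0 ≤ 1 - u + u^2/2 - Real.exp (-u) := by
    apply nonneg_of_deriv (F' := fun t => -1 + t + Real.exp (-t)) ?_ (by simp) ?_ hu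
    · intro t
      have h1 : HasDerivAt (fun t : ℝ => Real.exp (-t)) (-Real.exp (-t)) t := by
        simpa using ((hasDerivAt_id t).neg).exp
      have h2 : HasDerivAt (fun t : ℝ => 1 - t + t^2/2) (-1 + t) t := by
        have := ((hasDerivAt_const t (1:ℝ)).sub (hasDerivAt_id t)).add
          ((hasDerivAt_pow 2 t).div_const 2)
        exact this.congr_deriv (by ring)
      exact (h2.sub h1).congr_deriv (by ring)
    · intro t ht
      have := Real.add_one_le_exp (-t)
      skip
      linarith
  linarith

lemma exp_neg_ge_three {u : ℝ} (hu : 0 ≤ u) : 1 - u + u^2/2 - u^3/6 ≤ Real.exp (-u) := by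
  have key : 0 ≤ Real.exp (-u) - (1 - u + u^2/2 - u^3/6) := by
    apply nonneg_of_deriv (F' := fun t => -Real.exp (-t) + 1 - t + t^2/2) ?_ (by simp) ?_ hu
    · intro t
      have h1 : HasDerivAt (fun t : ℝ => Real.exp (-t)) (-Real.exp (-t)) t := by
        simpa using ((hasDerivAt_id t).neg).exp
      have h2 : HasDerivAt (fun t : ℝ => 1 - t + t^2/2 - t^3/6) (-1 + t - t^2/2) t := by
        have := (((hasDerivAt_const t (1:ℝ)).sub (hasDerivAt_id t)).add
          ((hasDerivAt_pow 2 t).div_const 2)).sub ((hasDerivAt_pow 3 t).div_const 6)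
        exact this.congr_deriv (by ring)
      exact (h1.sub h2).congr_deriv (by ring)
    · intro t ht
      have := exp_neg_le_two ht
      skip
      linarith
  linarith

lemma exp_neg_le_four {u : ℝ} (hu : 0 ≤ u) :
    Real.exp (-u) ≤ 1 - u + u^2/2 - u^3/6 + u^4/24 := by
  have key : 0 ≤ 1 - u + u^2/2 - u^3/6 + u^4/24 - Real.exp (-u) := by
    apply nonneg_of_deriv (F' := fun t => -1 + t - t^2/2 + t^3/6 + Real.exp (-t)) ?_ (by simp) ?_ hu
    · intro t
      have h1 : HasDerivAt (fun t : ℝ => Real.exp (-t)) (-Real.exp (-t)) t := by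
        simpa using ((hasDerivAt_id t).neg).exp
      have h2 : HasDerivAt (fun t : ℝ => 1 - t + t^2/2 - t^3/6 + t^4/24)
          (-1 + t - t^2/2 + t^3/6) t := by
        have := ((((hasDerivAt_const t (1:ℝ)).sub (hasDerivAt_id t)).add
          ((hasDerivAt_pow 2 t).div_const 2)).sub ((hasDerivAt_pow 3 t).div_const 6)).add
          ((hasDerivAt_pow 4 t).div_const 24)
        exact this.congr_deriv (by ring)
      exact (h2.sub h1).congr_deriv (by ring)
    · intro t ht
      have := exp_neg_ge_three ht
      skip
      linarith
  linarith

lemma exp_t_ub (t : ℝ) : Real.exp (-t^2/2) ≤ 1 - t^2/2 + t^4/8 - t^6/48 + t^8/384 := by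
  have h := exp_neg_le_four (u := t^2/2) (by positivity)
  rw [show -t^2/2 = -(t^2/2) by ring]
  calc Real.exp (-(t^2/2)) ≤ 1 - t^2/2 + (t^2/2)^2/2 - (t^2/2)^3/6 + (t^2/2)^4/24 := h
    _ = 1 - t^2/2 + t^4/8 - t^6/48 + t^8/384 := by ring

lemma exp_t_lb (t : ℝ) : 1 - t^2/2 + t^4/8 - t^6/48 ≤ Real.exp (-t^2/2) := by
  have h := exp_neg_ge_three (u := t^2/2) (by positivity)
  rw [show -t^2/2 = -(t^2/2) by ring]
  calc (1:ℝ) - t^2/2 + t^4/8 - t^6/48 = 1 - t^2/2 + (t^2/2)^2/2 - (t^2/2)^3/6 := by ring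
    _ ≤ Real.exp (-(t^2/2)) := h

lemma poly_int9 (b : ℝ) : ∫ t in (0:ℝ)..b, (1 - t^2/2 + t^4/8 - t^6/48 + t^8/384)
    = b - b^3/6 + b^5/40 - b^7/336 + b^9/3456 := by
  rw [intervalIntegral.integral_eq_sub_of_hasDerivAt
    (f := fun t => t - t^3/6 + t^5/40 - t^7/336 + t^9/3456)]
  · norm_num
  · intro t _
    have := (((((hasDerivAt_id t).sub ((hasDerivAt_pow 3 t).div_const 6)).add
      ((hasDerivAt_pow 5 t).div_const 40)).sub ((hasDerivAt_pow 7 t).div_const 336)).add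
      ((hasDerivAt_pow 9 t).div_const 3456))
    exact this.congr_deriv (by norm_num; ring)
  · apply Continuous.intervalIntegrable; continuity

lemma poly_int7 (b : ℝ) : ∫ t in (0:ℝ)..b, (1 - t^2/2 + t^4/8 - t^6/48)
    = b - b^3/6 + b^5/40 - b^7/336 := by
  rw [intervalIntegral.integral_eq_sub_of_hasDerivAt
    (f := fun t => t - t^3/6 + t^5/40 - t^7/336)]
  · norm_num
  · intro t _
    have := ((((hasDerivAt_id t).sub ((hasDerivAt_pow 3 t).div_const 6)).add
      ((hasDerivAt_pow 5 t).div_const 40)).sub ((hasDerivAt_pow 7 t).div_const 336))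
    exact this.congr_deriv (by norm_num; ring)
  · apply Continuous.intervalIntegrable; continuity

lemma s_ub : (Real.sqrt (2 * Real.pi))⁻¹ ≤ 0.39895 := by
  rw [inv_le_comm₀ sqrt2pi_pos (by norm_num)]
  calc (0.39895:ℝ)⁻¹ ≤ 2.5066 := by norm_num
    _ ≤ _ := sqrt2pi_lb

lemma s_lb : (0.3989:ℝ) ≤ (Real.sqrt (2 * Real.pi))⁻¹ := by
  rw [le_inv_comm₀ (by norm_num) sqrt2pi_pos]
  calc Real.sqrt (2*Real.pi) ≤ 2.5067 := sqrt2pi_ub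
    _ ≤ (0.3989:ℝ)⁻¹ := by norm_num

lemma gg_eq (t : ℝ) : gg t = (Real.sqrt (2 * Real.pi))⁻¹ * Real.exp (-t ^ 2 / 2) := rfl

lemma int_gg_eq (b : ℝ) : (∫ t in (0:ℝ)..b, gg t)
    = (Real.sqrt (2 * Real.pi))⁻¹ * ∫ t in (0:ℝ)..b, Real.exp (-t^2/2) := by
  rw [← intervalIntegral.integral_const_mul]; rfl

lemma cont_exp_sq : Continuous (fun t : ℝ => Real.exp (-t^2/2)) := by continuity

lemma gaussQ_ge_poly {b : ℝ} (hb : 0 ≤ b) :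
    1/2 - 0.39895 * (b - b^3/6 + b^5/40 - b^7/336 + b^9/3456) ≤ gaussQ b := by
  rw [gaussQ_sub_intervalIntegral, int_gg_eq]
  have h1 : (∫ t in (0:ℝ)..b, Real.exp (-t^2/2)) ≤ b - b^3/6 + b^5/40 - b^7/336 + b^9/3456 := by
    rw [← poly_int9]
    apply intervalIntegral.integral_mono_on hb (cont_exp_sq.intervalIntegrable _ _)
      ((by continuity : Continuous fun t : ℝ => 1 - t^2/2 + t^4/8 - t^6/48 + t^8/384).intervalIntegrable _ _)
    intro t _; exact exp_t_ub t
  have h2 : (0:ℝ) ≤ ∫ t in (0:ℝ)..b, Real.exp (-t^2/2) := by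
    apply intervalIntegral.integral_nonneg hb
    intro t _; positivity
  have h3 := s_ub
  have h4 : (0:ℝ) < (Real.sqrt (2*Real.pi))⁻¹ := by positivity
  nlinarith

lemma gaussQ_le_poly {a : ℝ} (ha : 0 ≤ a) (hP : 0 ≤ a - a^3/6 + a^5/40 - a^7/336) :
    gaussQ a ≤ 1/2 - 0.3989 * (a - a^3/6 + a^5/40 - a^7/336) := by
  rw [gaussQ_sub_intervalIntegral, int_gg_eq]
  have h1 : a - a^3/6 + a^5/40 - a^7/336 ≤ ∫ t in (0:ℝ)..a, Real.exp (-t^2/2) := by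
    rw [← poly_int7]
    apply intervalIntegral.integral_mono_on ha
      ((by continuity : Continuous fun t : ℝ => 1 - t^2/2 + t^4/8 - t^6/48).intervalIntegrable _ _)
      (cont_exp_sq.intervalIntegrable _ _)
    intro t _; exact exp_t_lb t
  have h3 := s_lb
  nlinarith

lemma exp_taylor9 {x : ℝ} (hx : 0 ≤ x) :
    1 + x + x^2/2 + x^3/6 + x^4/24 + x^5/120 + x^6/720 + x^7/5040 + x^8/40320 + x^9/362880
      ≤ Real.exp x := by
  have h := Real.sum_le_exp_of_nonneg hx 10
  have : (∑ i ∈ Finset.range 10, x ^ i / (Nat.factorial i : ℝ))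
      = 1 + x + x^2/2 + x^3/6 + x^4/24 + x^5/120 + x^6/720 + x^7/5040 + x^8/40320 + x^9/362880 := by
    simp [Finset.sum_range_succ, Nat.factorial]
  linarith [this ▸ h]

lemma exp_neg_ub {x c : ℝ} (hx : 0 ≤ x)
    (h : 1 ≤ c * (1 + x + x^2/2 + x^3/6 + x^4/24 + x^5/120 + x^6/720 + x^7/5040 + x^8/40320 + x^9/362880)) :
    Real.exp (-x) ≤ c := by
  have ht := exp_taylor9 hx
  have hT : (0:ℝ) < 1 + x + x^2/2 + x^3/6 + x^4/24 + x^5/120 + x^6/720 + x^7/5040 + x^8/40320 + x^9/362880 := by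
    positivity
  have hc : 0 < c := by nlinarith
  rw [Real.exp_neg, inv_le_comm₀ (Real.exp_pos x) hc]
  rw [inv_le_iff_one_le_mul₀ hc] at *
  nlinarith [Real.exp_pos x]

lemma exp_lb_cert {r c : ℝ} (hr : 0 ≤ r) (hc : 0 < c)
    (h : 1 ≤ c * (1 + r + r^2/2 + r^3/6 + r^4/24 + r^5/120 + r^6/720 + r^7/5040 + r^8/40320 + r^9/362880)) :
    1 ≤ Real.exp r * c := by
  have ht := exp_taylor9 hr
  nlinarith

lemma gg_anti {a x : ℝ} (ha : 0 ≤ a) (hax : a ≤ x) : gg x ≤ gg a := by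
  rw [gg_eq, gg_eq]
  have : Real.exp (-x^2/2) ≤ Real.exp (-a^2/2) := by
    apply Real.exp_le_exp.2; nlinarith
  have h4 : (0:ℝ) < (Real.sqrt (2*Real.pi))⁻¹ := by positivity
  nlinarith

lemma gg_ub {a v : ℝ} (ha : 0 ≤ a)
    (h : 1 ≤ v * (1 + a^2/2 + (a^2/2)^2/2 + (a^2/2)^3/6 + (a^2/2)^4/24 + (a^2/2)^5/120
      + (a^2/2)^6/720 + (a^2/2)^7/5040 + (a^2/2)^8/40320 + (a^2/2)^9/362880)) :
    gg a ≤ 0.39895 * v := by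
  have h1 : Real.exp (-(a^2/2)) ≤ v := exp_neg_ub (by positivity) (by nlinarith)
  rw [gg_eq]
  have h2 := s_ub
  have h3 : Real.exp (-a^2/2) ≤ v := by rw [show -a^2/2 = -(a^2/2) by ring]; exact h1
  have h4 : (0:ℝ) < (Real.sqrt (2*Real.pi))⁻¹ := by positivity
  have h5 : (0:ℝ) < Real.exp (-a^2/2) := Real.exp_pos _
  nlinarith

lemma interval_step {a b c d u r x : ℝ} (h0a : 0 ≤ a) (hxa : a ≤ x) (hxb : x ≤ b)
    (hc : c ≤ gaussQ b) (hc0 : 0 < c) (hd : gaussQ a ≤ d) (hd1 : d < 1)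
    (hu : gg a ≤ u)
    (hr : 1 ≤ Real.exp r * c) (hr0 : 0 ≤ r)
    (hnum : b * r + u / (c * (1 - d)) ≤ 2 + 2*a + a^3) :
    x * (Real.log (1 - gaussQ x) - Real.log (gaussQ x))
      + gg x * ((gaussQ x)⁻¹ + (1 - gaussQ x)⁻¹) ≤ 2 + 2*x + x^3 := by
  set Q := gaussQ x with hQdef
  have hQpos : 0 < Q := gaussQ_pos x
  have hQ1 : Q < 1 := gaussQ_lt_one x
  have hcx : c ≤ Q := le_trans hc (gaussQ_anti hxb)
  have hdx : Q ≤ d := le_trans (gaussQ_anti hxa) hd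
  have hQhalf : Q ≤ 1/2 := by
    have h := gaussQ_anti (le_trans h0a hxa : (0:ℝ) ≤ x)
    rw [gaussQ_zero] at h; exact h
  have hL0 : 0 ≤ Real.log (1 - Q) - Real.log Q := by
    have := Real.log_le_log hQpos (by linarith : Q ≤ 1 - Q); linarith
  have hLr : Real.log (1 - Q) - Real.log Q ≤ r := by
    have h1 : Real.log (1 - Q) ≤ 0 := Real.log_nonpos (by linarith) (by linarith)
    have hcr : Real.exp (-r) ≤ c := by
      have hinv : c⁻¹ ≤ Real.exp r := by
        rw [inv_le_iff_one_le_mul₀ hc0]; linarith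
      rw [Real.exp_neg, inv_le_comm₀ (Real.exp_pos r) hc0]
      exact hinv
    have h2 : -r ≤ Real.log Q :=
      calc -r = Real.log (Real.exp (-r)) := (Real.log_exp _).symm
        _ ≤ Real.log c := Real.log_le_log (Real.exp_pos _) hcr
        _ ≤ Real.log Q := Real.log_le_log hc0 hcx
    linarith
  have hterm1 : x * (Real.log (1 - Q) - Real.log Q) ≤ b * r :=
    mul_le_mul hxb hLr hL0 (by linarith)
  have hgx : gg x ≤ u := le_trans (gg_anti h0a hxa) hu
  have hu0 : 0 ≤ u := le_trans (gg_pos x).le hgx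
  have hsum : Q⁻¹ + (1 - Q)⁻¹ = (Q * (1 - Q))⁻¹ := by
    rw [inv_add_inv (ne_of_gt hQpos) (by linarith : (1:ℝ) - Q ≠ 0),
      show Q + (1 - Q) = 1 by ring, one_div]
  have hges : c * (1 - d) ≤ Q * (1 - Q) :=
    mul_le_mul hcx (by linarith) (by linarith) (le_of_lt hQpos)
  have hcd0 : 0 < c * (1 - d) := mul_pos hc0 (by linarith)
  have hterm2 : gg x * (Q * (1 - Q))⁻¹ ≤ u / (c * (1 - d)) := by
    rw [div_eq_mul_inv]
    exact mul_le_mul hgx (inv_anti₀ hcd0 hges) (inv_nonneg.2 (mul_nonneg hQpos.le (by linarith))) hu0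
  have hrhs : 2 + 2*a + a^3 ≤ 2 + 2*x + x^3 := by nlinarith [sq_nonneg x, sq_nonneg a, sq_nonneg (x+a), sq_nonneg (x-a)]
  rw [hsum]
  linarith

lemma core_small {x : ℝ} (h0 : 0 ≤ x) (h15 : x ≤ 1.5) :
    x * (Real.log (1 - gaussQ x) - Real.log (gaussQ x))
      + gg x * ((gaussQ x)⁻¹ + (1 - gaussQ x)⁻¹) ≤ 2 + 2*x + x^3 := by
  rcases le_or_gt x (0.1:ℝ) with hx0 | hx0
  · exact interval_step (a := (0:ℝ)) (b := (0.1:ℝ)) (c := (460171/1000000:ℝ)) (d := (1/2:ℝ))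
      (u := (0.39895:ℝ) * (1:ℝ)) (r := (3881/5000:ℝ)) (by norm_num) h0 hx0
      (le_trans (by norm_num) (gaussQ_ge_poly (by norm_num)))
      (by norm_num)
      (le_trans (gaussQ_le_poly (by norm_num) (by norm_num)) (by norm_num))
      (by norm_num)
      (gg_ub (by norm_num) (by norm_num))
      (exp_lb_cert (by norm_num) (by norm_num) (by norm_num))
      (by norm_num)
      (by norm_num)
  rcases le_or_gt x (0.2:ℝ) with hx1 | hx1
  · exact interval_step (a := (0.1:ℝ)) (b := (0.2:ℝ)) (c := (210369/500000:ℝ)) (d := (460177/1000000:ℝ))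
      (u := (0.39895:ℝ) * (995013/1000000:ℝ)) (r := (4329/5000:ℝ)) (by norm_num) (le_of_lt hx0) hx1
      (le_trans (by norm_num) (gaussQ_ge_poly (by norm_num)))
      (by norm_num)
      (le_trans (gaussQ_le_poly (by norm_num) (by norm_num)) (by norm_num))
      (by norm_num)
      (gg_ub (by norm_num) (by norm_num))
      (exp_lb_cert (by norm_num) (by norm_num) (by norm_num))
      (by norm_num)
      (by norm_num)
  rcases le_or_gt x (0.35:ℝ) with hx2 | hx2
  · exact interval_step (a := (0.2:ℝ)) (b := (0.35:ℝ)) (c := (181583/500000:ℝ)) (d := (420749/1000000:ℝ))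
      (u := (0.39895:ℝ) * (980199/1000000:ℝ)) (r := (10129/10000:ℝ)) (by norm_num) (le_of_lt hx1) hx2
      (le_trans (by norm_num) (gaussQ_ge_poly (by norm_num)))
      (by norm_num)
      (le_trans (gaussQ_le_poly (by norm_num) (by norm_num)) (by norm_num))
      (by norm_num)
      (gg_ub (by norm_num) (by norm_num))
      (exp_lb_cert (by norm_num) (by norm_num) (by norm_num))
      (by norm_num)
      (by norm_num)
  rcases le_or_gt x (0.5:ℝ) with hx3 | hx3
  · exact interval_step (a := (0.35:ℝ)) (b := (0.5:ℝ)) (c := (308533/1000000:ℝ)) (d := (22699/62500:ℝ))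
      (u := (0.39895:ℝ) * (940589/1000000:ℝ)) (r := (147/125:ℝ)) (by norm_num) (le_of_lt hx2) hx3
      (le_trans (by norm_num) (gaussQ_ge_poly (by norm_num)))
      (by norm_num)
      (le_trans (gaussQ_le_poly (by norm_num) (by norm_num)) (by norm_num))
      (by norm_num)
      (gg_ub (by norm_num) (by norm_num))
      (exp_lb_cert (by norm_num) (by norm_num) (by norm_num))
      (by norm_num)
      (by norm_num)
  rcases le_or_gt x (0.65:ℝ) with hx4 | hx4
  · exact interval_step (a := (0.5:ℝ)) (b := (0.65:ℝ)) (c := (257841/1000000:ℝ)) (d := (308559/1000000:ℝ))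
      (u := (0.39895:ℝ) * (882497/1000000:ℝ)) (r := (2711/2000:ℝ)) (by norm_num) (le_of_lt hx3) hx4
      (le_trans (by norm_num) (gaussQ_ge_poly (by norm_num)))
      (by norm_num)
      (le_trans (gaussQ_le_poly (by norm_num) (by norm_num)) (by norm_num))
      (by norm_num)
      (gg_ub (by norm_num) (by norm_num))
      (exp_lb_cert (by norm_num) (by norm_num) (by norm_num))
      (by norm_num)
      (by norm_num)
  rcases le_or_gt x (0.8:ℝ) with hx5 | hx5
  · exact interval_step (a := (0.65:ℝ)) (b := (0.8:ℝ)) (c := (211849/1000000:ℝ)) (d := (2063/8000:ℝ))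
      (u := (0.39895:ℝ) * (202393/250000:ℝ)) (r := (15519/10000:ℝ)) (by norm_num) (le_of_lt hx4) hx5
      (le_trans (by norm_num) (gaussQ_ge_poly (by norm_num)))
      (by norm_num)
      (le_trans (gaussQ_le_poly (by norm_num) (by norm_num)) (by norm_num))
      (by norm_num)
      (gg_ub (by norm_num) (by norm_num))
      (exp_lb_cert (by norm_num) (by norm_num) (by norm_num))
      (by norm_num)
      (by norm_num)
  rcases le_or_gt x (0.95:ℝ) with hx6 | hx6
  · exact interval_step (a := (0.8:ℝ)) (b := (0.95:ℝ)) (c := (42761/250000:ℝ)) (d := (211901/1000000:ℝ))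
      (u := (0.39895:ℝ) * (14523/20000:ℝ)) (r := (17659/10000:ℝ)) (by norm_num) (le_of_lt hx5) hx6
      (le_trans (by norm_num) (gaussQ_ge_poly (by norm_num)))
      (by norm_num)
      (le_trans (gaussQ_le_poly (by norm_num) (by norm_num)) (by norm_num))
      (by norm_num)
      (gg_ub (by norm_num) (by norm_num))
      (exp_lb_cert (by norm_num) (by norm_num) (by norm_num))
      (by norm_num)
      (by norm_num)
  rcases le_or_gt x (1.1:ℝ) with hx7 | hx7
  · exact interval_step (a := (0.95:ℝ)) (b := (1.1:ℝ)) (c := (67817/500000:ℝ)) (d := (171159/1000000:ℝ))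
      (u := (0.39895:ℝ) * (19901/31250:ℝ)) (r := (19979/10000:ℝ)) (by norm_num) (le_of_lt hx6) hx7
      (le_trans (by norm_num) (gaussQ_ge_poly (by norm_num)))
      (by norm_num)
      (le_trans (gaussQ_le_poly (by norm_num) (by norm_num)) (by norm_num))
      (by norm_num)
      (gg_ub (by norm_num) (by norm_num))
      (exp_lb_cert (by norm_num) (by norm_num) (by norm_num))
      (by norm_num)
      (by norm_num)
  rcases le_or_gt x (1.25:ℝ) with hx8 | hx8
  · exact interval_step (a := (1.1:ℝ)) (b := (1.25:ℝ)) (c := (105543/1000000:ℝ)) (d := (135953/1000000:ℝ))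
      (u := (0.39895:ℝ) * (21843/40000:ℝ)) (r := (2811/1250:ℝ)) (by norm_num) (le_of_lt hx7) hx8
      (le_trans (by norm_num) (gaussQ_ge_poly (by norm_num)))
      (by norm_num)
      (le_trans (gaussQ_le_poly (by norm_num) (by norm_num)) (by norm_num))
      (by norm_num)
      (gg_ub (by norm_num) (by norm_num))
      (exp_lb_cert (by norm_num) (by norm_num) (by norm_num))
      (by norm_num)
      (by norm_num)
  rcases le_or_gt x (1.4:ℝ) with hx9 | hx9
  · exact interval_step (a := (1.25:ℝ)) (b := (1.4:ℝ)) (c := (80413/1000000:ℝ)) (d := (106453/1000000:ℝ))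
      (u := (0.39895:ℝ) * (228917/500000:ℝ)) (r := (25209/10000:ℝ)) (by norm_num) (le_of_lt hx8) hx9
      (le_trans (by norm_num) (gaussQ_ge_poly (by norm_num)))
      (by norm_num)
      (le_trans (gaussQ_le_poly (by norm_num) (by norm_num)) (by norm_num))
      (by norm_num)
      (gg_ub (by norm_num) (by norm_num))
      (exp_lb_cert (by norm_num) (by norm_num) (by norm_num))
      (by norm_num)
      (by norm_num)
  exact interval_step (a := (1.4:ℝ)) (b := (1.5:ℝ)) (c := (13219/200000:ℝ)) (d := (82851/1000000:ℝ))
      (u := (0.39895:ℝ) * (23457/62500:ℝ)) (r := (6793/2500:ℝ)) (by norm_num) (le_of_lt hx9) h15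
      (le_trans (by norm_num) (gaussQ_ge_poly (by norm_num)))
      (by norm_num)
      (le_trans (gaussQ_le_poly (by norm_num) (by norm_num)) (by norm_num))
      (by norm_num)
      (gg_ub (by norm_num) (by norm_num))
      (exp_lb_cert (by norm_num) (by norm_num) (by norm_num))
      (by norm_num)
      (by norm_num)


lemma hasDerivAt_gg (t : ℝ) : HasDerivAt gg (-t * gg t) t := by
  have h1 : HasDerivAt (fun y : ℝ => -y^2/2) (-t) t := by
    have h := (hasDerivAt_pow 2 t).neg.div_const 2
    refine h.congr_deriv ?_
    push_cast; ring
  have h2 := (h1.exp).const_mul ((Real.sqrt (2 * Real.pi))⁻¹)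
  have h3 : HasDerivAt (fun y : ℝ => (Real.sqrt (2 * Real.pi))⁻¹ * Real.exp (-y^2/2))
      (-t * ((Real.sqrt (2 * Real.pi))⁻¹ * Real.exp (-t^2/2))) t := by
    exact h2.congr_deriv (by ring)
  exact h3

lemma gg_tendsto_zero : Tendsto gg atTop (nhds 0) := by
  have ha : Tendsto (fun t : ℝ => t^2) atTop atTop := tendsto_pow_atTop two_ne_zero
  have hb : Tendsto (fun t : ℝ => -t^2) atTop atBot := tendsto_neg_atTop_atBot.comp ha
  have h1 : Tendsto (fun t : ℝ => -t^2/2) atTop atBot := hb.atBot_div_const (by norm_num)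
  have h2 : Tendsto (fun t : ℝ => Real.exp (-t^2/2)) atTop (nhds 0) :=
    Real.tendsto_exp_atBot.comp h1
  have h3 := h2.const_mul ((Real.sqrt (2 * Real.pi))⁻¹)
  rw [mul_zero] at h3
  have hgge : gg = fun t : ℝ => (Real.sqrt (2 * Real.pi))⁻¹ * Real.exp (-t^2/2) :=
    funext gg_eq
  rw [hgge]
  exact h3

lemma gaussQ_tail_lb {x : ℝ} (hx : 1 < x) : gg x * ((x^2-1)/x^3) ≤ gaussQ x := by
  have hx0 : (0:ℝ) < x := by linarith
  set F : ℝ → ℝ := fun t => -(gg t * (t⁻¹ - t⁻¹^3))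
  have hF' : ∀ t ∈ Set.Ioi x, HasDerivAt F (gg t * (1 - 3*(t⁻¹)^4)) t := by
    intro t ht
    have ht0 : (0:ℝ) < t := lt_trans hx0 (Set.mem_Ioi.1 ht)
    have h1 : HasDerivAt (fun t : ℝ => t⁻¹ - t⁻¹^3) (-(t⁻¹)^2 + 3*(t⁻¹)^4) t := by
      have hinv := hasDerivAt_inv (ne_of_gt ht0)
      have := hinv.sub ((hinv.pow 3))
      refine this.congr_deriv ?_
      simp only [Nat.reduceSub, Nat.cast_ofNat]; ring
    have := ((hasDerivAt_gg t).mul h1).neg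
    refine this.congr_deriv ?_
    have : t ≠ 0 := ne_of_gt ht0
    field_simp
    ring
  have hFtend : Tendsto F atTop (nhds 0) := by
    have hinv : Tendsto (fun t : ℝ => t⁻¹) atTop (nhds 0) := tendsto_inv_atTop_zero
    have hpow := hinv.pow 3
    rw [show ((0:ℝ)^3) = 0 by norm_num] at hpow
    have hsub := hinv.sub hpow
    rw [sub_zero] at hsub
    have hmul := gg_tendsto_zero.mul hsub
    rw [mul_zero] at hmul
    have hneg := hmul.neg
    rw [neg_zero] at hneg
    exact hneg
  have hFcont : ContinuousWithinAt F (Set.Ici x) x := by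
    apply ContinuousAt.continuousWithinAt
    have h : ContinuousAt (fun t : ℝ => t⁻¹ - t⁻¹^3) x :=
      (continuousAt_inv₀ (ne_of_gt hx0)).sub ((continuousAt_inv₀ (ne_of_gt hx0)).pow 3)
    exact (gg_cont.continuousAt.mul h).neg
  have hint : IntegrableOn (fun t => gg t * (1 - 3*(t⁻¹)^4)) (Set.Ioi x) := by
    apply Integrable.mono ((gg_integrable.const_mul 3).integrableOn)
    · apply ContinuousOn.aestronglyMeasurable ?_ measurableSet_Ioi
      apply ContinuousOn.mul gg_cont.continuousOn
      intro t ht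
      have ht0 : t ≠ 0 := ne_of_gt (lt_trans hx0 ht)
      exact (continuousAt_const.sub (((continuousAt_inv₀ ht0).pow 4).const_mul 3)).continuousWithinAt
    · filter_upwards [MeasureTheory.ae_restrict_mem measurableSet_Ioi] with t ht
      have ht1 : 1 < t := lt_trans hx ht
      have hgg := gg_pos t
      have ht0 : (0:ℝ) < t := by linarith
      have h4 : 0 < (t⁻¹)^4 := pow_pos (inv_pos.2 ht0) 4
      have h5 : (t⁻¹)^4 ≤ 1 := by
        apply pow_le_one₀ (by positivity)
        rw [inv_le_one_iff₀]; right; linarith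
      have habs : |1 - 3*(t⁻¹)^4| ≤ 3 := by
        rw [abs_le]; constructor <;> nlinarith
      rw [Real.norm_eq_abs, Real.norm_eq_abs, abs_mul, abs_of_pos hgg,
        abs_of_pos (by positivity : (0:ℝ) < 3 * gg t)]
      nlinarith [abs_nonneg (1 - 3*(t⁻¹)^4)]
  have hkey := MeasureTheory.integral_Ioi_of_hasDerivAt_of_tendsto hFcont hF' hint hFtend
  have hcomp : (∫ t in Set.Ioi x, gg t * (1 - 3*(t⁻¹)^4)) ≤ ∫ t in Set.Ioi x, gg t := by
    apply MeasureTheory.setIntegral_mono_on hint gg_integrable.integrableOn measurableSet_Ioi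
    intro t ht
    have := gg_pos t
    have ht0 : (0:ℝ) < t := lt_trans hx0 ht
    have h4 : 0 < (t⁻¹)^4 := pow_pos (inv_pos.2 ht0) 4
    nlinarith
  rw [hkey] at hcomp
  rw [gaussQ_eq, MeasureTheory.integral_Ici_eq_integral_Ioi]
  have hFx : F x = -(gg x * (x⁻¹ - x⁻¹^3)) := rfl
  rw [hFx] at hcomp
  have heq : gg x * ((x^2-1)/x^3) = 0 - -(gg x * (x⁻¹ - x⁻¹^3)) := by
    have : x ≠ 0 := ne_of_gt hx0
    field_simp
    ring
  rw [heq]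
  exact hcomp

lemma log_sqrt2pi_ub : Real.log (Real.sqrt (2 * Real.pi)) ≤ 0.93 := by
  rw [Real.log_le_iff_le_exp sqrt2pi_pos]
  calc Real.sqrt (2 * Real.pi) ≤ 2.5067 := sqrt2pi_ub
    _ ≤ 1 + 0.93 + 0.93^2/2 + 0.93^3/6 + 0.93^4/24 + 0.93^5/120 + 0.93^6/720 + 0.93^7/5040
        + 0.93^8/40320 + 0.93^9/362880 := by norm_num
    _ ≤ Real.exp 0.93 := exp_taylor9 (by norm_num)

lemma log_le_div_e {t : ℝ} (ht : 0 < t) : Real.log t ≤ t * (10/27) := by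
  have he : (2.7:ℝ) < Real.exp 1 := by
    have := Real.exp_one_gt_d9; linarith
  have h1 : Real.log t = Real.log (t / Real.exp 1) + 1 := by
    rw [Real.log_div (ne_of_gt ht) (ne_of_gt (Real.exp_pos 1)), Real.log_exp]; ring
  have h2 : Real.log (t / Real.exp 1) ≤ t / Real.exp 1 - 1 :=
    Real.log_le_sub_one_of_pos (by positivity)
  have h3 : t / Real.exp 1 ≤ t * (10/27) := by
    rw [div_le_iff₀ (Real.exp_pos 1)]
    nlinarith
  linarith

lemma core_tail {x : ℝ} (hx : 1.5 ≤ x) :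
    x * (Real.log (1 - gaussQ x) - Real.log (gaussQ x))
      + gg x * ((gaussQ x)⁻¹ + (1 - gaussQ x)⁻¹) ≤ 2 + 2*x + x^3 := by
  have hx1 : (1:ℝ) < x := by linarith
  have hx0 : (0:ℝ) < x := by linarith
  have hx21 : (0:ℝ) < x^2 - 1 := by nlinarith
  set Q := gaussQ x with hQdef
  have hQpos : 0 < Q := gaussQ_pos x
  have hQ1 : Q < 1 := gaussQ_lt_one x
  set w := x^3/(x^2-1) with hwdef
  have hw0 : 0 < w := by positivity
  have hwx : w * (x^2 - 1) = x^3 := by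
    rw [hwdef]; field_simp
  have hqlb : gg x * ((x^2-1)/x^3) ≤ Q := gaussQ_tail_lb hx1
  have hqlb0 : 0 < gg x * ((x^2-1)/x^3) := by
    apply mul_pos (gg_pos x) (by positivity)
  have hQd : Q ≤ 1/10 := by
    have h1 := gaussQ_anti hx
    have h2 := gaussQ_le_poly (a := 1.5) (by norm_num) (by norm_num)
    have : gaussQ 1.5 ≤ 1/10 := by
      refine le_trans h2 ?_; norm_num
    linarith
  -- L bound
  have hgg0 : (0:ℝ) < gg x := gg_pos x
  have hlogq : -Real.log Q ≤ 0.93 + x^2/2 + (10/27)*w := by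
    have h1 : Real.log (gg x * ((x^2-1)/x^3)) ≤ Real.log Q :=
      Real.log_le_log hqlb0 hqlb
    have h2 : Real.log (gg x * ((x^2-1)/x^3))
        = Real.log (gg x) + Real.log ((x^2-1)/x^3) := by
      rw [Real.log_mul (ne_of_gt hgg0) (by positivity)]
    have h3 : Real.log (gg x) = -Real.log (Real.sqrt (2*Real.pi)) - x^2/2 := by
      rw [gg_eq, Real.log_mul (by positivity) (ne_of_gt (Real.exp_pos _)),
        Real.log_inv, Real.log_exp]
      ring
    have h4 : Real.log ((x^2-1)/x^3) = -Real.log w := by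
      rw [hwdef, ← Real.log_inv, inv_div]
    have h5 : Real.log w ≤ w * (10/27) := log_le_div_e hw0
    have h6 := log_sqrt2pi_ub
    rw [h2, h3, h4] at h1
    linarith
  have hL : Real.log (1 - Q) - Real.log Q ≤ 0.93 + x^2/2 + (10/27)*w := by
    have h1 : Real.log (1 - Q) ≤ 0 := Real.log_nonpos (by linarith) (by linarith)
    linarith
  have hL0 : 0 ≤ Real.log (1 - Q) - Real.log Q := by
    have := Real.log_le_log hQpos (by linarith : Q ≤ 1 - Q); linarith
  -- second term
  have hsum : Q⁻¹ + (1 - Q)⁻¹ = (Q * (1 - Q))⁻¹ := by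
    rw [inv_add_inv (ne_of_gt hQpos) (by linarith : (1:ℝ) - Q ≠ 0),
      show Q + (1 - Q) = 1 by ring, one_div]
  have hges : (gg x * ((x^2-1)/x^3)) * (9/10) ≤ Q * (1 - Q) :=
    mul_le_mul hqlb (by linarith) (by norm_num) (le_of_lt hQpos)
  have hcd0 : 0 < (gg x * ((x^2-1)/x^3)) * (9/10) := by positivity
  have hterm2 : gg x * (Q * (1 - Q))⁻¹ ≤ (10/9) * w := by
    have h1 : (Q * (1-Q))⁻¹ ≤ ((gg x * ((x^2-1)/x^3)) * (9/10))⁻¹ := inv_anti₀ hcd0 hges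
    have h2 : gg x * ((gg x * ((x^2-1)/x^3)) * (9/10))⁻¹ = (10/9) * w := by
      rw [hwdef]
      field_simp
      skip
    calc gg x * (Q * (1 - Q))⁻¹ ≤ gg x * ((gg x * ((x^2-1)/x^3)) * (9/10))⁻¹ :=
          mul_le_mul_of_nonneg_left h1 hgg0.le
      _ = (10/9) * w := h2
  rw [hsum]
  have hterm1 : x * (Real.log (1 - Q) - Real.log Q) ≤ x * (0.93 + x^2/2 + (10/27)*w) :=
    mul_le_mul_of_nonneg_left hL hx0.le
  -- final polynomial inequality
  have hfinal : x * (0.93 + x^2/2 + (10/27)*w) + (10/9)*w ≤ 2 + 2*x + x^3 := by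
    rw [← sub_nonneg]
    have key : (2 + 2*x + x^3 - (x * (0.93 + x^2/2 + (10/27)*w) + (10/9)*w)) * (x^2-1)
        = (2 + 1.07*x + x^3/2)*(x^2-1) - (10/27)*x^4 - (10/9)*x^3 := by
      linear_combination ((-(10/27))*x - 10/9) * hwx
    have h15 : (0:ℝ) ≤ x - 1.5 := by linarith
    have hpos : 0 ≤ (2 + 1.07*x + x^3/2)*(x^2-1) - (10/27)*x^4 - (10/9)*x^3 := by
      have e : (2 + 1.07*x + x^3/2)*(x^2-1) - (10/27)*x^4 - (10/9)*x^3
          = 317/320 + (7147/800)*(x-1.5) + (286/25)*(x-1.5)^2 + (1273/150)*(x-1.5)^3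
            + (365/108)*(x-1.5)^4 + (1/2)*(x-1.5)^5 := by ring
      rw [e]
      have p2 := pow_nonneg h15 2
      have p3 := pow_nonneg h15 3
      have p4 := pow_nonneg h15 4
      have p5 := pow_nonneg h15 5
      linarith
    have h2 : 0 ≤ (2 + 2*x + x^3 - (x * (0.93 + x^2/2 + (10/27)*w) + (10/9)*w)) * (x^2-1) := by
      rw [key]; exact hpos
    nlinarith [h2, hx21]
  linarith

lemma hasDerivAt_binH {q : ℝ} (h0 : 0 < q) (h1 : q < 1) :
    HasDerivAt binH (Real.log (1 - q) - Real.log q) q := by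
  have heq : binH = fun q => -(q * Real.log q) - (1 - q) * Real.log (1 - q) := by
    funext p; simp only [binH]; ring
  have ha : HasDerivAt (fun q : ℝ => q * Real.log q) (Real.log q + 1) q := by
    have := (hasDerivAt_id q).mul (Real.hasDerivAt_log (ne_of_gt h0))
    refine this.congr_deriv ?_
    field_simp; simp only [id]; ring
  have h1q : HasDerivAt (fun q : ℝ => 1 - q) (-1) q := by
    simpa using (hasDerivAt_id q).const_sub 1
  have hlog : HasDerivAt (fun q : ℝ => Real.log (1 - q)) ((1 - q)⁻¹ * (-1)) q :=
    (Real.hasDerivAt_log (by linarith)).comp q h1q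
  have hb : HasDerivAt (fun q : ℝ => (1 - q) * Real.log (1 - q))
      (-(Real.log (1 - q) + 1)) q := by
    have := h1q.mul hlog
    refine this.congr_deriv ?_
    have hne : (1:ℝ) - q ≠ 0 := by linarith
    rw [show (1-q) * ((1-q)⁻¹ * -1) = -((1-q)*(1-q)⁻¹) by ring, mul_inv_cancel₀ hne]
    ring
  rw [heq]
  have := (ha.neg).sub hb
  refine this.congr_deriv ?_
  ring

lemma deriv1_eq : deriv (fun y => binH (gaussQ y))
    = fun y => gg y * (Real.log (gaussQ y) - Real.log (1 - gaussQ y)) := by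
  funext y
  have h := (hasDerivAt_binH (gaussQ_pos y) (gaussQ_lt_one y)).comp y (hasDerivAt_gaussQ y)
  have h2 : HasDerivAt (fun y => binH (gaussQ y))
      (gg y * (Real.log (gaussQ y) - Real.log (1 - gaussQ y))) y := by
    refine h.congr_deriv ?_
    ring
  exact h2.deriv

lemma deriv2_eq (x : ℝ) : deriv (deriv (fun y => binH (gaussQ y))) x = FF x := by
  rw [deriv1_eq]
  have hQ' := hasDerivAt_gaussQ x
  have hQpos := gaussQ_pos x
  have hQ1 := gaussQ_lt_one x
  have hlogQ : HasDerivAt (fun y => Real.log (gaussQ y)) ((gaussQ x)⁻¹ * -(gg x)) x :=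
    (Real.hasDerivAt_log (ne_of_gt hQpos)).comp x hQ'
  have h1mQ : HasDerivAt (fun y => 1 - gaussQ y) (gg x) x := by
    simpa using hQ'.const_sub 1
  have hlog1mQ : HasDerivAt (fun y => Real.log (1 - gaussQ y)) ((1 - gaussQ x)⁻¹ * gg x) x :=
    (Real.hasDerivAt_log (by linarith)).comp x h1mQ
  have hmul := (hasDerivAt_gg x).mul (hlogQ.sub hlog1mQ)
  have : deriv (fun y => gg y * (Real.log (gaussQ y) - Real.log (1 - gaussQ y)))
      x = -x * gg x * (Real.log (gaussQ x) - Real.log (1 - gaussQ x))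
        + gg x * ((gaussQ x)⁻¹ * -(gg x) - (1 - gaussQ x)⁻¹ * gg x) := hmul.deriv
  rw [this, FF]
  ring

lemma FF_even (x : ℝ) : FF (-x) = FF x := by
  rw [FF, FF, gaussQ_neg, gg_even]
  ring_nf

lemma FF_bound {x : ℝ} (hx : 0 ≤ x) : |FF x| ≤ gg x * (2 + 2*x + x^3) := by
  have hQpos := gaussQ_pos x
  have hQ1 := gaussQ_lt_one x
  have hcore : x * (Real.log (1 - gaussQ x) - Real.log (gaussQ x))
      + gg x * ((gaussQ x)⁻¹ + (1 - gaussQ x)⁻¹) ≤ 2 + 2*x + x^3 := by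
    rcases le_or_gt x 1.5 with h | h
    · exact core_small hx h
    · exact core_tail h.le
  have hQhalf : gaussQ x ≤ 1/2 := by
    have h := gaussQ_anti hx
    rw [gaussQ_zero] at h
    exact h
  have hL0 : 0 ≤ Real.log (1 - gaussQ x) - Real.log (gaussQ x) := by
    have := Real.log_le_log hQpos (by linarith : gaussQ x ≤ 1 - gaussQ x); linarith
  have hA : 0 ≤ x * gg x * (Real.log (1 - gaussQ x) - Real.log (gaussQ x)) := by
    apply mul_nonneg (mul_nonneg hx (gg_pos x).le) hL0
  have hB : 0 ≤ gg x ^ 2 * ((gaussQ x)⁻¹ + (1 - gaussQ x)⁻¹) := by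
    apply mul_nonneg (sq_nonneg _)
    have : 0 < (1:ℝ) - gaussQ x := by linarith
    positivity
  have habs : |FF x| ≤ x * gg x * (Real.log (1 - gaussQ x) - Real.log (gaussQ x))
      + gg x ^ 2 * ((gaussQ x)⁻¹ + (1 - gaussQ x)⁻¹) := by
    rw [FF, abs_le]; constructor <;> linarith
  have hgg := gg_pos x
  calc |FF x| ≤ _ := habs
    _ = gg x * (x * (Real.log (1 - gaussQ x) - Real.log (gaussQ x))
        + gg x * ((gaussQ x)⁻¹ + (1 - gaussQ x)⁻¹)) := by ring
    _ ≤ gg x * (2 + 2*x + x^3) := mul_le_mul_of_nonneg_left hcore hgg.le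

theorem entropy_Q_deriv2_bound (x : ℝ) :
    |deriv (deriv fun y => binH (gaussQ y)) x|
      ≤ 2 / Real.sqrt (2 * Real.pi) * (1 + |x|) * Real.exp (-x ^ 2 / 2)
        + |x| ^ 3 / Real.sqrt (2 * Real.pi) * Real.exp (-x ^ 2 / 2) := by
  have hrhs : 2 / Real.sqrt (2 * Real.pi) * (1 + |x|) * Real.exp (-x ^ 2 / 2)
      + |x| ^ 3 / Real.sqrt (2 * Real.pi) * Real.exp (-x ^ 2 / 2)
      = gg x * (2 + 2*|x| + |x|^3) := by
    rw [gg_eq]; ring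
  rw [hrhs, deriv2_eq]
  rcases le_or_gt 0 x with h | h
  · rw [abs_of_nonneg h]
    exact FF_bound h
  · rw [abs_of_neg h, ← FF_even]
    have h2 : gg x = gg (-x) := (gg_even x).symm
    rw [h2]
    exact FF_bound (by linarith)
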